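/- arXiv:2301.13395 — 3 statements merged into one kernel-verified Lean document; each statement's English description precedes it below -/
import Mathlib

section
/- Let C = C1 ∩ C2 with C1 = {x : Ax = b} and C2 = {x : x ≥ 0}, both nonempty, and let f(x) = wᵀx + (γ/2)‖x‖² with γ > 0. Define, for α ∈ (0, 2/γ), the operator T(z) = z − P_{C2}(z) + P_{C1}((2 − αγ)P_{C2}(z) − z − αw). If z* is a fixed point of T, then x* = P_{C2}(z*) is the unique minimizer of f over C. -/
open Matrix

/-- Variational inequality for a distance-minimizing point over a convex set. -/
lemma proj_var_ineq {n : ℕ} {K : Set (Fin n → ℝ)} (hK : Convex ℝ K) {z p : Fin n → ℝ}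
    (hp : p ∈ K) (hmin : ∀ x ∈ K, ∑ i, (p i - z i) ^ 2 ≤ ∑ i, (x i - z i) ^ 2)
    {y : Fin n → ℝ} (hy : y ∈ K) :
    0 ≤ ∑ i, (y i - p i) * (p i - z i) := by
  by_contra hc
  push_neg at hc
  set c := ∑ i, (y i - p i) * (p i - z i) with hc'
  set d := ∑ i, (y i - p i) ^ 2 with hd'
  have hd0 : 0 ≤ d := Finset.sum_nonneg fun i _ => sq_nonneg _
  have hdpos : 0 < d := by
    rcases eq_or_lt_of_le hd0 with h | h
    · exfalso
      have hyp : ∀ i ∈ Finset.univ, (y i - p i) ^ 2 = 0 := by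
        intro i _
        have := (Finset.sum_eq_zero_iff_of_nonneg (fun i _ => sq_nonneg (y i - p i))).mp h.symm
        exact this i (Finset.mem_univ i)
      have : c = 0 := by
        apply Finset.sum_eq_zero
        intro i _
        have h2 := hyp i (Finset.mem_univ i)
        have : y i - p i = 0 := by nlinarith [sq_nonneg (y i - p i)]
        rw [this]; ring
      linarith
    · exact h
  set t := min 1 (-c / d) with ht'
  have htpos : 0 < t := lt_min one_pos (div_pos (by linarith) hdpos)
  have ht1 : t ≤ 1 := min_le_left _ _
  have htd : t * d ≤ -c := by
    have : t ≤ -c / d := min_le_right _ _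
    calc t * d ≤ (-c / d) * d := by nlinarith
    _ = -c := by field_simp
  have hmem : ((1 - t) • p + t • y) ∈ K := hK hp hy (by linarith) (le_of_lt htpos) (by ring)
  have hle := hmin _ hmem
  have hexp : ∑ i, (((1 - t) • p + t • y) i - z i) ^ 2
      = (∑ i, (p i - z i) ^ 2) + 2 * t * c + t ^ 2 * d := by
    rw [hc', hd', Finset.mul_sum, Finset.mul_sum, ← Finset.sum_add_distrib,
      ← Finset.sum_add_distrib]
    exact Finset.sum_congr rfl fun i _ => by
      simp only [Pi.add_apply, Pi.smul_apply, smul_eq_mul]; ring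
  rw [hexp] at hle
  nlinarith

/-- Davis–Yin fixed points: if `z*` is a fixed point of the DYS operator `T`, then
`x* = P_{C2}(z*)` is the unique minimizer of `f(x) = wᵀx + (γ/2)‖x‖²` over `C = C1 ∩ C2`. -/
theorem stmt4 {m n : ℕ} (A : Matrix (Fin m) (Fin n) ℝ) (hA : A.rank = m)
    (b : Fin m → ℝ) (w : Fin n → ℝ) (γ α : ℝ) (hγ : 0 < γ)
    (hα : 0 < α) (hα2 : α < 2 / γ)
    (C1 C2 C : Set (Fin n → ℝ))
    (hC1 : C1 = {x | A.mulVec x = b}) (hC2 : C2 = {x | ∀ i, 0 ≤ x i})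
    (hC : C = C1 ∩ C2) (hCne : C.Nonempty)
    (P1 P2 : (Fin n → ℝ) → (Fin n → ℝ))
    (hP1 : ∀ z, P1 z ∈ C1 ∧ ∀ x ∈ C1, ∑ i, (P1 z i - z i) ^ 2 ≤ ∑ i, (x i - z i) ^ 2)
    (hP2 : ∀ z, P2 z ∈ C2 ∧ ∀ x ∈ C2, ∑ i, (P2 z i - z i) ^ 2 ≤ ∑ i, (x i - z i) ^ 2)
    (f : (Fin n → ℝ) → ℝ) (hf : f = fun x => w ⬝ᵥ x + γ / 2 * ∑ i, (x i) ^ 2)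
    (T : (Fin n → ℝ) → (Fin n → ℝ))
    (hT : T = fun z => z - P2 z + P1 ((2 - α * γ) • P2 z - z - α • w))
    (zs : Fin n → ℝ) (hfix : T zs = zs) :
    P2 zs ∈ C ∧ ∀ x ∈ C, x ≠ P2 zs → f (P2 zs) < f x := by
  -- convexity of C1 and C2
  have hK1 : Convex ℝ C1 := by
    rw [hC1]
    intro x hx y hy a b' ha hb hab
    simp only [Set.mem_setOf_eq] at *
    rw [Matrix.mulVec_add, Matrix.mulVec_smul, Matrix.mulVec_smul, hx, hy,
      ← add_smul, hab, one_smul]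
  have hK2 : Convex ℝ C2 := by
    rw [hC2]
    intro x hx y hy a b' ha hb hab i
    simp only [Set.mem_setOf_eq] at *
    have := add_nonneg (mul_nonneg ha (hx i)) (mul_nonneg hb (hy i))
    simpa [Pi.add_apply, Pi.smul_apply, smul_eq_mul] using this
  set x := P2 zs with hx
  set u := (2 - α * γ) • P2 zs - zs - α • w with hu
  -- fixed point equation
  rw [hT] at hfix
  simp only at hfix
  have h1 : P1 u = x := by
    funext i
    have := congrFun hfix i
    simp only [Pi.add_apply, Pi.sub_apply] at this
    linarith
  have hx1 : x ∈ C1 := h1 ▸ (hP1 u).1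
  have hx2 : x ∈ C2 := (hP2 zs).1
  have hxC : x ∈ C := hC ▸ ⟨hx1, hx2⟩
  refine ⟨hxC, ?_⟩
  intro y hyC hyx
  have hy1 : y ∈ C1 := (hC ▸ hyC).1
  have hy2 : y ∈ C2 := (hC ▸ hyC).2
  -- variational inequalities
  have s2 : 0 ≤ ∑ i, (y i - x i) * (x i - zs i) :=
    proj_var_ineq hK2 (hP2 zs).1 (hP2 zs).2 hy2
  have s1 : 0 ≤ ∑ i, (y i - x i) * (x i - u i) := by
    have := proj_var_ineq hK1 (hP1 u).1 (hP1 u).2 hy1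
    rwa [h1] at this
  -- combine
  have hcomb : (∑ i, (y i - x i) * (x i - zs i)) + (∑ i, (y i - x i) * (x i - u i))
      = α * ∑ i, (y i - x i) * (γ * x i + w i) := by
    rw [Finset.mul_sum, ← Finset.sum_add_distrib]
    refine Finset.sum_congr rfl fun i _ => ?_
    have hui : u i = (2 - α * γ) * x i - zs i - α * w i := by
      simp [hu, hx, Pi.sub_apply, Pi.smul_apply, smul_eq_mul]
    rw [hui]; ring
  have key : 0 ≤ ∑ i, (y i - x i) * (γ * x i + w i) := by
    nlinarith [s1, s2]
  -- strict positivity of the squared distance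
  have hne : ∃ i, y i ≠ x i := Function.ne_iff.mp hyx
  obtain ⟨i0, hi0⟩ := hne
  have hsq : 0 < ∑ i, (y i - x i) ^ 2 := by
    apply Finset.sum_pos' (fun i _ => sq_nonneg _)
    exact ⟨i0, Finset.mem_univ i0, by have := sub_ne_zero.mpr hi0; positivity⟩
  -- expand f
  have hfd : f y - f x = (∑ i, (y i - x i) * (γ * x i + w i)) + γ / 2 * ∑ i, (y i - x i) ^ 2 := by
    rw [hf]
    simp only [dotProduct]
    rw [Finset.mul_sum, Finset.mul_sum, Finset.mul_sum, ← Finset.sum_add_distrib,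
      ← Finset.sum_add_distrib, ← Finset.sum_add_distrib, ← Finset.sum_sub_distrib]
    exact Finset.sum_congr rfl fun i _ => by ring
  have : 0 < f y - f x := by nlinarith
  linarith
end

section
/- Let T be a nonexpansive averaged operator on ℝ^n with a fixed point, and let z^{k+1} = T(z^k). Then ‖z^{k+1} − z^k‖² = O(1/k); more precisely, Σ_{k=0}^{∞} ‖z^{k+1} − z^k‖² < ∞ and ‖z^{k+1} − z^k‖ is nonincreasing, so ‖z^{k+1} − z^k‖² ≤ (1/(k+1)) Σ_{j=0}^{k} ‖z^{j+1} − z^j‖². -/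
open Finset

lemma convex_norm_sq_identity {E : Type*} [NormedAddCommGroup E] [InnerProductSpace ℝ E]
    (θ : ℝ) (a b : E) :
    ‖(1 - θ) • a + θ • b‖ ^ 2
      = (1 - θ) * ‖a‖ ^ 2 + θ * ‖b‖ ^ 2 - θ * (1 - θ) * ‖a - b‖ ^ 2 := by
  have h1 : ‖(1 - θ) • a + θ • b‖ ^ 2
      = (1-θ)^2 * inner ℝ a a + 2*(1-θ)*θ * inner ℝ a b + θ^2 * inner ℝ b b := by
    rw [← real_inner_self_eq_norm_sq]
    simp only [inner_add_left, inner_add_right, real_inner_smul_left, real_inner_smul_right,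
      real_inner_comm a b]
    ring
  have h2 : ‖a - b‖ ^ 2 = inner ℝ a a - 2 * inner ℝ a b + inner ℝ b b := by
    rw [← real_inner_self_eq_norm_sq]
    simp only [inner_sub_left, inner_sub_right, real_inner_comm a b]
    ring
  have ha : ‖a‖ ^ 2 = inner ℝ a a := (real_inner_self_eq_norm_sq a).symm
  have hb : ‖b‖ ^ 2 = inner ℝ b b := (real_inner_self_eq_norm_sq b).symm
  rw [h1, h2, ha, hb]; ring

/-- Krasnosel'skii–Mann iteration of an averaged operator with a fixed point:
the squared residuals are summable, the residual norms are nonincreasing, and hence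
`‖z^{k+1} − z^k‖² ≤ (1/(k+1)) Σ_{j=0}^{k} ‖z^{j+1} − z^j‖²` (the `O(1/k)` rate). -/
theorem stmt5 {n : ℕ} (T R : EuclideanSpace ℝ (Fin n) → EuclideanSpace ℝ (Fin n))
    (θ : ℝ) (hθ : θ ∈ Set.Ioo (0 : ℝ) 1)
    (hR : ∀ a b, ‖R a - R b‖ ≤ ‖a - b‖)
    (hT : T = fun z => (1 - θ) • z + θ • R z)
    (hfix : ∃ z, T z = z)
    (z : ℕ → EuclideanSpace ℝ (Fin n)) (hz : ∀ k, z (k + 1) = T (z k)) :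
    (Summable fun k => ‖z (k + 1) - z k‖ ^ 2) ∧
    (∀ k, ‖z (k + 2) - z (k + 1)‖ ≤ ‖z (k + 1) - z k‖) ∧
    (∀ k, ‖z (k + 1) - z k‖ ^ 2 ≤
      (1 / (k + 1 : ℝ)) * ∑ j ∈ Finset.range (k + 1), ‖z (j + 1) - z j‖ ^ 2) := by
  obtain ⟨hθ0, hθ1⟩ := hθ
  obtain ⟨p, hp⟩ := hfix
  have hTdiff : ∀ a b, T a - T b = (1 - θ) • (a - b) + θ • (R a - R b) := by
    intro a b
    simp only [hT, smul_sub]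
    abel
  -- R fixes p
  have hRp : R p = p := by
    have h0 : (1 - θ) • p + θ • R p = p := by
      have := hp; rw [hT] at this; simpa using this
    have h1 : θ • (R p - p) = 0 := by
      rw [smul_sub]
      have h2 : (1 - θ) • p + θ • R p - p = 0 := by rw [h0]; simp
      rw [sub_smul, one_smul] at h2
      calc θ • R p - θ • p = p - θ • p + θ • R p - p := by abel
        _ = 0 := h2
    rcases smul_eq_zero.mp h1 with h | h
    · exact absurd h (ne_of_gt hθ0)
    · exact sub_eq_zero.mp h
  -- T nonexpansive
  have hTne : ∀ a b, ‖T a - T b‖ ≤ ‖a - b‖ := by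
    intro a b
    rw [hTdiff]
    calc ‖(1 - θ) • (a - b) + θ • (R a - R b)‖
        ≤ ‖(1 - θ) • (a - b)‖ + ‖θ • (R a - R b)‖ := norm_add_le _ _
      _ = (1 - θ) * ‖a - b‖ + θ * ‖R a - R b‖ := by
          rw [norm_smul, norm_smul, Real.norm_eq_abs, Real.norm_eq_abs,
            abs_of_pos (by linarith), abs_of_pos hθ0]
      _ ≤ (1 - θ) * ‖a - b‖ + θ * ‖a - b‖ := by
          have := hR a b; nlinarith
      _ = ‖a - b‖ := by ring
  -- key contraction inequality toward p
  have hkey : ∀ k, ((1 - θ) / θ) * ‖z (k + 1) - z k‖ ^ 2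
      ≤ ‖z k - p‖ ^ 2 - ‖z (k + 1) - p‖ ^ 2 := by
    intro k
    have hstep : z (k + 1) - p = (1 - θ) • (z k - p) + θ • (R (z k) - p) := by
      rw [hz k, ← hp, hTdiff, hRp, hp]
    have h1 : ‖z (k + 1) - p‖ ^ 2
        = (1 - θ) * ‖z k - p‖ ^ 2 + θ * ‖R (z k) - p‖ ^ 2
          - θ * (1 - θ) * ‖(z k - p) - (R (z k) - p)‖ ^ 2 := by
      rw [hstep, convex_norm_sq_identity]
    have h2 : ‖R (z k) - p‖ ≤ ‖z k - p‖ := by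
      have := hR (z k) p; rwa [hRp] at this
    have h3 : (z k - p) - (R (z k) - p) = z k - R (z k) := by abel
    have h4 : z (k + 1) - z k = θ • (R (z k) - z k) := by
      rw [hz k, hT]
      simp only
      rw [smul_sub, sub_smul, one_smul]
      abel
    have h5 : ‖z (k + 1) - z k‖ ^ 2 = θ ^ 2 * ‖z k - R (z k)‖ ^ 2 := by
      rw [h4, norm_smul, Real.norm_eq_abs, abs_of_pos hθ0, ← norm_neg, neg_sub, mul_pow]
    have h6 : ‖R (z k) - p‖ ^ 2 ≤ ‖z k - p‖ ^ 2 := by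
      have hn : (0:ℝ) ≤ ‖R (z k) - p‖ := norm_nonneg _
      nlinarith
    rw [h3] at h1
    have hθne : θ ≠ 0 := ne_of_gt hθ0
    rw [h5]
    have heq : ((1 - θ) / θ) * (θ ^ 2 * ‖z k - R (z k)‖ ^ 2)
        = θ * (1 - θ) * ‖z k - R (z k)‖ ^ 2 := by
      field_simp
    rw [heq]
    linarith [h1, h6, mul_le_mul_of_nonneg_left h6 (le_of_lt hθ0)]
  have hnonneg : ∀ k : ℕ, (0:ℝ) ≤ ‖z (k + 1) - z k‖ ^ 2 := fun k => sq_nonneg _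
  have hcpos : (0:ℝ) < (1 - θ) / θ := div_pos (by linarith) hθ0
  constructor
  · -- summability
    have hsum : Summable fun k => ((1 - θ) / θ) * ‖z (k + 1) - z k‖ ^ 2 := by
      apply summable_of_sum_range_le (c := ‖z 0 - p‖ ^ 2)
      · intro k; positivity
      · intro m
        calc ∑ i ∈ range m, ((1 - θ) / θ) * ‖z (i + 1) - z i‖ ^ 2
            ≤ ∑ i ∈ range m, (‖z i - p‖ ^ 2 - ‖z (i + 1) - p‖ ^ 2) :=
              Finset.sum_le_sum fun i _ => hkey i
          _ = ‖z 0 - p‖ ^ 2 - ‖z m - p‖ ^ 2 := Finset.sum_range_sub' (fun i => ‖z i - p‖ ^ 2) m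
          _ ≤ ‖z 0 - p‖ ^ 2 := by nlinarith [sq_nonneg ‖z m - p‖]
    have := hsum.mul_left (((1 - θ) / θ)⁻¹)
    refine Summable.congr this fun k => ?_
    exact inv_mul_cancel_left₀ (ne_of_gt hcpos) _
  have hmono : ∀ k, ‖z (k + 2) - z (k + 1)‖ ≤ ‖z (k + 1) - z k‖ := by
    intro k
    have : z (k + 2) = T (z (k + 1)) := hz (k + 1)
    rw [this, hz k]
    exact hTne _ _
  refine ⟨hmono, ?_⟩
  intro k
  have hanti : ∀ j, j ≤ k → ‖z (k + 1) - z k‖ ≤ ‖z (j + 1) - z j‖ := by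
    intro j hj
    have : Antitone fun m => ‖z (m + 1) - z m‖ :=
      antitone_nat_of_succ_le fun m => hmono m
    exact this hj
  have hS : (k + 1 : ℝ) * ‖z (k + 1) - z k‖ ^ 2
      ≤ ∑ j ∈ Finset.range (k + 1), ‖z (j + 1) - z j‖ ^ 2 := by
    calc (k + 1 : ℝ) * ‖z (k + 1) - z k‖ ^ 2
        = ∑ _j ∈ Finset.range (k + 1), ‖z (k + 1) - z k‖ ^ 2 := by
          rw [Finset.sum_const, Finset.card_range, nsmul_eq_mul]; push_cast; ring
      _ ≤ ∑ j ∈ Finset.range (k + 1), ‖z (j + 1) - z j‖ ^ 2 := by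
          apply Finset.sum_le_sum
          intro j hj
          have hj' : j ≤ k := Nat.lt_succ_iff.mp (Finset.mem_range.mp hj)
          exact pow_le_pow_left₀ (norm_nonneg _) (hanti j hj') 2
  rw [one_div, inv_mul_eq_div, le_div_iff₀ (by positivity : (0:ℝ) < (k:ℝ) + 1)]
  nlinarith [hS]
end

section
/- Let H1, H2 be subspaces of ℝ^n with H1^⊥ ∩ H2^⊥ = {0}, let cos(τ) < 1 be the cosine of the first principal angle between H1^⊥ and H2^⊥ (taken as 0 if either subspace is trivial), and let σ ∈ (−1, 1). Then the operator M = P_{H1^⊥}P_{H2^⊥} + σ·P_{H1}P_{H2} has operator norm ‖M‖ ≤ √(max{cos(τ), σ²}) < 1. -/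
open scoped RealInnerProductSpace

/-- Orthogonal projection onto a subspace of Euclidean space, as a map into the space. -/
noncomputable def projSub {n : ℕ} (K : Submodule ℝ (EuclideanSpace ℝ (Fin n))) :
    EuclideanSpace ℝ (Fin n) →L[ℝ] EuclideanSpace ℝ (Fin n) :=
  K.subtypeL.comp (K.orthogonalProjection)

lemma projSub_apply {n : ℕ} (K : Submodule ℝ (EuclideanSpace ℝ (Fin n)))
    (x : EuclideanSpace ℝ (Fin n)) : projSub K x = (K.orthogonalProjection x : _) := rfl

lemma projSub_mem {n : ℕ} (K : Submodule ℝ (EuclideanSpace ℝ (Fin n)))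
    (x : EuclideanSpace ℝ (Fin n)) : projSub K x ∈ K := SetLike.coe_mem _

lemma projSub_norm_le {n : ℕ} (K : Submodule ℝ (EuclideanSpace ℝ (Fin n)))
    (x : EuclideanSpace ℝ (Fin n)) : ‖projSub K x‖ ≤ ‖x‖ := by
  have h1 : ‖projSub K x‖ = ‖K.orthogonalProjection x‖ := rfl
  calc ‖projSub K x‖ ≤ ‖K.orthogonalProjection‖ * ‖x‖ := by
        rw [h1]; exact (K.orthogonalProjection).le_opNorm x
    _ ≤ 1 * ‖x‖ := by
        exact mul_le_mul_of_nonneg_right (Submodule.orthogonalProjectionOnto_norm_le K) (norm_nonneg x)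
    _ = ‖x‖ := one_mul _

lemma projSub_inner_self {n : ℕ} (K : Submodule ℝ (EuclideanSpace ℝ (Fin n)))
    (x : EuclideanSpace ℝ (Fin n)) : ⟪projSub K x, x⟫ = ‖projSub K x‖ ^ 2 := by
  have h0 : ⟪x - projSub K x, projSub K x⟫ = 0 :=
    K.starProjection_inner_eq_zero x _ (projSub_mem K x)
  have h1 : ⟪x, projSub K x⟫ = ⟪projSub K x, projSub K x⟫ := by
    have := h0
    rw [inner_sub_left] at this
    linarith
  rw [real_inner_comm, h1, real_inner_self_eq_norm_sq]

set_option maxHeartbeats 1000000 in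
/-- Norm bound for the DYS Jacobian: if `H1^⊥ ∩ H2^⊥ = {0}`, `cos τ < 1` is the cosine of the
first principal angle between `H1^⊥` and `H2^⊥` (taken to be `0` if either is trivial), and
`σ ∈ (−1,1)`, then `M = P_{H1^⊥}P_{H2^⊥} + σ P_{H1}P_{H2}` satisfies
`‖M‖ ≤ √(max{cos τ, σ²}) < 1`. -/
theorem stmt14 {n : ℕ} (H1 H2 : Submodule ℝ (EuclideanSpace ℝ (Fin n)))
    (h : H1ᗮ ⊓ H2ᗮ = ⊥) (c σ : ℝ) (hσ : σ ∈ Set.Ioo (-1 : ℝ) 1)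
    (hc0 : (H1ᗮ = ⊥ ∨ H2ᗮ = ⊥) → c = 0)
    (hcmax : H1ᗮ ≠ ⊥ → H2ᗮ ≠ ⊥ →
      IsGreatest {r | ∃ u ∈ H1ᗮ, ∃ v ∈ H2ᗮ, ‖u‖ = 1 ∧ ‖v‖ = 1 ∧ r = ⟪u, v⟫} c)
    (hc1 : c < 1)
    (M : EuclideanSpace ℝ (Fin n) →L[ℝ] EuclideanSpace ℝ (Fin n))
    (hM : M = (projSub H1ᗮ).comp (projSub H2ᗮ) + σ • (projSub H1).comp (projSub H2)) :
    ‖M‖ ≤ Real.sqrt (max c (σ ^ 2)) ∧ Real.sqrt (max c (σ ^ 2)) < 1 := by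
  obtain ⟨hσ1, hσ2⟩ := hσ
  -- c is nonnegative
  have hcnn : 0 ≤ c := by
    by_cases h1 : H1ᗮ = ⊥
    · exact le_of_eq (hc0 (Or.inl h1)).symm
    by_cases h2 : H2ᗮ = ⊥
    · exact le_of_eq (hc0 (Or.inr h2)).symm
    obtain ⟨⟨u, hu, v, hv, hu1, hv1, hcr⟩, hub⟩ := hcmax h1 h2
    have hneg : -c ≤ c := by
      apply hub
      exact ⟨-u, neg_mem hu, v, hv, by simpa using hu1, hv1, by
        rw [inner_neg_left, ← hcr]⟩
    linarith
  have hmax0 : 0 ≤ max c (σ ^ 2) := le_trans hcnn (le_max_left _ _)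
  have hmax1 : max c (σ ^ 2) < 1 := max_lt hc1 (by nlinarith)
  constructor
  · -- key Cauchy-Schwarz-like bound with constant c
    have key : ∀ u ∈ H1ᗮ, ∀ v ∈ H2ᗮ, ⟪u, v⟫ ≤ c * (‖u‖ * ‖v‖) := by
      intro u hu v hv
      rcases eq_or_ne u 0 with rfl | hu0
      · simp
      rcases eq_or_ne v 0 with rfl | hv0
      · simp
      have h1 : H1ᗮ ≠ ⊥ := by
        intro hb; exact hu0 (by simpa [hb] using hu)
      have h2 : H2ᗮ ≠ ⊥ := by
        intro hb; exact hv0 (by simpa [hb] using hv)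
      have hub := (hcmax h1 h2).2
      have hn : ⟪(‖u‖⁻¹ • u : EuclideanSpace ℝ (Fin n)), (‖v‖⁻¹ • v : EuclideanSpace ℝ (Fin n))⟫ ≤ c := by
        apply hub
        refine ⟨_, H1ᗮ.smul_mem _ hu, _, H2ᗮ.smul_mem _ hv, ?_, ?_, rfl⟩
        · simpa using norm_smul_inv_norm (𝕜 := ℝ) hu0
        · simpa using norm_smul_inv_norm (𝕜 := ℝ) hv0
      rw [real_inner_smul_left, real_inner_smul_right] at hn
      have hup : 0 < ‖u‖ := norm_pos_iff.2 hu0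
      have hvp : 0 < ‖v‖ := norm_pos_iff.2 hv0
      calc ⟪u, v⟫ = (‖u‖ * ‖v‖) * (‖u‖⁻¹ * (‖v‖⁻¹ * ⟪u, v⟫)) := by
            field_simp
        _ ≤ (‖u‖ * ‖v‖) * c :=
            mul_le_mul_of_nonneg_left hn (le_of_lt (mul_pos hup hvp))
        _ = c * (‖u‖ * ‖v‖) := by ring
    apply M.opNorm_le_bound (Real.sqrt_nonneg _)
    intro w
    set w1 : EuclideanSpace ℝ (Fin n) := projSub H2 w with hw1
    set w2 : EuclideanSpace ℝ (Fin n) := projSub H2ᗮ w with hw2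
    set a : EuclideanSpace ℝ (Fin n) := projSub H1ᗮ w2 with ha
    set b : EuclideanSpace ℝ (Fin n) := projSub H1 w1 with hb
    have hMw : M w = a + σ • b := by
      rw [hM]; rfl
    -- orthogonality of a and σ • b
    have hab : ⟪a, σ • b⟫ = 0 := by
      rw [real_inner_smul_right]
      have : ⟪b, a⟫ = 0 :=
        Submodule.inner_right_of_mem_orthogonal (projSub_mem H1 w1) (projSub_mem H1ᗮ w2)
      rw [real_inner_comm] at this
      rw [this, mul_zero]
    have hMsq : ‖M w‖ ^ 2 = ‖a‖ ^ 2 + σ ^ 2 * ‖b‖ ^ 2 := by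
      rw [hMw, norm_add_sq_real, hab, norm_smul]
      simp [mul_pow, sq_abs]
    -- ‖w‖² = ‖w1‖² + ‖w2‖²
    have hw12 : w1 + w2 = w := H2.starProjection_add_starProjection_orthogonal w
    have hw1w2 : ⟪w1, w2⟫ = 0 :=
      Submodule.inner_right_of_mem_orthogonal (projSub_mem H2 w) (projSub_mem H2ᗮ w)
    have hwsq : ‖w‖ ^ 2 = ‖w1‖ ^ 2 + ‖w2‖ ^ 2 := by
      rw [← hw12, norm_add_sq_real, hw1w2]; ring
    -- ‖a‖² ≤ c ‖w2‖²
    have haw2 : ⟪a, w2⟫ = ‖a‖ ^ 2 := projSub_inner_self H1ᗮ w2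
    have haw2le : ⟪a, w2⟫ ≤ c * (‖a‖ * ‖w2‖) :=
      key a (projSub_mem H1ᗮ w2) w2 (projSub_mem H2ᗮ w)
    have hale : ‖a‖ ≤ ‖w2‖ := projSub_norm_le H1ᗮ w2
    have hasq : ‖a‖ ^ 2 ≤ c * ‖w2‖ ^ 2 := by
      have h1 : ‖a‖ ^ 2 ≤ c * (‖a‖ * ‖w2‖) := haw2 ▸ haw2le
      nlinarith [norm_nonneg a, norm_nonneg w2, hcnn,
        mul_nonneg (mul_nonneg hcnn (sub_nonneg.2 hale)) (norm_nonneg w2)]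
    have hble : ‖b‖ ≤ ‖w1‖ := projSub_norm_le H1 w1
    have hbsq : ‖b‖ ^ 2 ≤ ‖w1‖ ^ 2 := by
      nlinarith [norm_nonneg b, norm_nonneg w1]
    clear_value w1 w2 a b
    have t1 : ‖a‖ ^ 2 ≤ max c (σ ^ 2) * ‖w2‖ ^ 2 :=
      le_trans hasq (mul_le_mul_of_nonneg_right (le_max_left _ _) (sq_nonneg _))
    have t2 : σ ^ 2 * ‖b‖ ^ 2 ≤ max c (σ ^ 2) * ‖w1‖ ^ 2 :=
      le_trans (mul_le_mul_of_nonneg_left hbsq (sq_nonneg σ))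
        (mul_le_mul_of_nonneg_right (le_max_right _ _) (sq_nonneg _))
    have hfin : ‖M w‖ ^ 2 ≤ max c (σ ^ 2) * ‖w‖ ^ 2 := by
      rw [hMsq, hwsq, mul_add]
      linarith
    calc ‖M w‖ = Real.sqrt (‖M w‖ ^ 2) := (Real.sqrt_sq (norm_nonneg _)).symm
      _ ≤ Real.sqrt (max c (σ ^ 2) * ‖w‖ ^ 2) := Real.sqrt_le_sqrt hfin
      _ = Real.sqrt (max c (σ ^ 2)) * ‖w‖ := by
          rw [Real.sqrt_mul hmax0, Real.sqrt_sq (norm_nonneg _)]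
  · have := Real.sqrt_lt_sqrt hmax0 hmax1
    simpa using this
end
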